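/- Let A be a normalized deterministic parity tree automaton over a finite nonempty alphabet Σ. Then L(A) ∈ Π⁰₂(T_Σ) (L(A) is a countable intersection of open sets) if and only if A contains no (0,1)-flower. -/

import Mathlib

open Filter

/-- A deterministic parity tree automaton over alphabet `Alpha` with state set `Q`. -/
structure DPTA (Alpha : Type) (Q : Type) where
  init : Q
  delta : Q → Alpha → Q × Q
  rank : Q → ℕ

namespace DPTA

variable {Alpha Q : Type}

/-- The state reached in one step from `q` reading letter `s` in direction `d`. -/
def next (M : DPTA Alpha Q) (q : Q) (s : Alpha) (d : Bool) : Q :=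
  if d then (M.delta q s).2 else (M.delta q s).1

/-- The state of the run started in `q` on the tree `t` at the node `v`
(nodes are words over `{0,1}`, head = first direction from the root). -/
def runFrom (M : DPTA Alpha Q) : Q → (List Bool → Alpha) → List Bool → Q
  | q, _, [] => q
  | q, t, d :: v => runFrom M (M.next q (t []) d) (fun u => t (d :: u)) v

/-- The state of the (unique) run of `M` on `t` at node `v`. -/
def run (M : DPTA Alpha Q) (t : List Bool → Alpha) (v : List Bool) : Q :=
  runFrom M M.init t v

/-- Parity acceptance: the largest value occurring infinitely often is even. -/
def ParityAccept (f : ℕ → ℕ) : Prop :=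
  Even (sSup {r : ℕ | ∃ᶠ n in atTop, f n = r})

/-- The prefix of length `n` of an infinite path. -/
def pref (π : ℕ → Bool) (n : ℕ) : List Bool :=
  List.ofFn fun i : Fin n => π i

/-- The run of `M` on `t` started at state `q` is accepting. -/
def AcceptsFrom (M : DPTA Alpha Q) (q : Q) (t : List Bool → Alpha) : Prop :=
  ∀ π : ℕ → Bool, ParityAccept fun n => M.rank (runFrom M q t (pref π n))

/-- The language recognised by `M`: trees with accepting run. -/
def Lang (M : DPTA Alpha Q) : Set (List Bool → Alpha) :=
  {t | M.AcceptsFrom M.init t}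

/-- The state reached from `q` following a finite sequence of steps
(steps = letter together with direction). -/
def follow (M : DPTA Alpha Q) (q : Q) (steps : List (Alpha × Bool)) : Q :=
  steps.foldl (fun p s => M.next p s.1 s.2) q

/-- All states visited along a path (the starting state included). -/
def statesOn (M : DPTA Alpha Q) (q : Q) (steps : List (Alpha × Bool)) : List Q :=
  List.scanl (fun p s => M.next p s.1 s.2) q steps

/-- The largest rank of a state visited along a path. -/
def maxRankOn (M : DPTA Alpha Q) (q : Q) (steps : List (Alpha × Bool)) : ℕ :=
  ((M.statesOn q steps).map M.rank).foldr max 0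

/-- `steps` forms a loop at `q` (a path of positive length from `q` to `q`). -/
def IsLoop (M : DPTA Alpha Q) (q : Q) (steps : List (Alpha × Bool)) : Prop :=
  steps ≠ [] ∧ M.follow q steps = q

/-- `M` contains an `(i,k)`-flower: loops `lam i, …, lam k` at a common state `q`,
the largest rank on `lam j` has the parity of `j` and increases strictly with `j`. -/
def HasFlower (M : DPTA Alpha Q) (i k : ℕ) : Prop :=
  ∃ (q : Q) (lam : ℕ → List (Alpha × Bool)),
    (∀ j, i ≤ j → j ≤ k → M.IsLoop q (lam j) ∧ M.maxRankOn q (lam j) % 2 = j % 2) ∧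
    (∀ j, i ≤ j → j < k → M.maxRankOn q (lam j) < M.maxRankOn q (lam (j + 1)))

/-- `q` is reachable from the initial state. -/
def Reachable (M : DPTA Alpha Q) (q : Q) : Prop :=
  ∃ steps, M.follow M.init steps = q

/-- `q` is productive: it occurs in some accepting run of `M`. -/
def Productive (M : DPTA Alpha Q) (q : Q) : Prop :=
  ∃ t ∈ M.Lang, ∃ v, M.run t v = q

/-- The transition from `q` reading `s` is used in some accepting run of `M`. -/
def ProductiveTrans (M : DPTA Alpha Q) (q : Q) (s : Alpha) : Prop :=
  ∃ t ∈ M.Lang, ∃ v, M.run t v = q ∧ t v = s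

/-- `q` is all-rejecting: started from `q`, the automaton accepts no tree. -/
def AllRejecting (M : DPTA Alpha Q) (q : Q) : Prop :=
  ∀ t, ¬ M.AcceptsFrom q t

/-- `M` is normalized: every state is reachable, every state is productive except
possibly one all-rejecting state `⊥` with `δ(⊥,σ) = (⊥,⊥)`, and every transition is
productive or of the form `δ(q,σ) = (⊥,⊥)`. -/
def Normalized (M : DPTA Alpha Q) : Prop :=
  (∀ q, M.Reachable q) ∧
  ∃ bot : Option Q,
    (∀ q, some q ≠ bot → M.Productive q) ∧
    (∀ q, some q = bot → M.AllRejecting q ∧ ∀ s, M.delta q s = (q, q)) ∧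
    (∀ q s, M.ProductiveTrans q s ∨
      (some (M.delta q s).1 = bot ∧ some (M.delta q s).2 = bot))

end DPTA


/-- `Σ⁰₂` sets: countable unions of closed sets. -/
def IsSigma02 {X : Type} [TopologicalSpace X] (s : Set X) : Prop :=
  ∃ f : ℕ → Set X, (∀ n, IsClosed (f n)) ∧ s = ⋃ n, f n

/-- `Π⁰₂` sets: countable intersections of open sets. -/
def IsPi02 {X : Type} [TopologicalSpace X] (s : Set X) : Prop :=
  ∃ f : ℕ → Set X, (∀ n, IsOpen (f n)) ∧ s = ⋂ n, f n

/-- `Π⁰₃` sets: countable intersections of `Σ⁰₂` sets. -/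
def IsPi03 {X : Type} [TopologicalSpace X] (s : Set X) : Prop :=
  ∃ f : ℕ → Set X, (∀ n, IsSigma02 (f n)) ∧ s = ⋂ n, f n

/-- `Σ⁰₃` sets: countable unions of `Π⁰₂` sets. -/
def IsSigma03 {X : Type} [TopologicalSpace X] (s : Set X) : Prop :=
  ∃ f : ℕ → Set X, (∀ n, IsPi02 (f n)) ∧ s = ⋃ n, f n


open Filter DPTA

namespace PfAux


/-- foldr max 0 membership bound -/
lemma le_foldr_max {l : List ℕ} {x : ℕ} (h : x ∈ l) : x ≤ l.foldr max 0 := by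
  induction l with
  | nil => simp at h
  | cons a l ih =>
    rcases List.mem_cons.1 h with rfl | h
    · exact le_max_left _ _
    · exact le_trans (ih h) (le_max_right _ _)

lemma foldr_max_mem {l : List ℕ} (h : l ≠ []) : l.foldr max 0 ∈ l := by
  induction l with
  | nil => simp at h
  | cons a l ih =>
    rcases eq_or_ne l [] with rfl | hl
    · simp
    · rcases max_cases a (l.foldr max 0) with ⟨h1, _⟩ | ⟨h1, _⟩
      · simp [List.foldr_cons, h1]
      · simp only [List.foldr_cons, h1]
        exact List.mem_cons_of_mem _ (ih hl)

lemma sSup_eq_of_mem_of_ub {A : Set ℕ} {R : ℕ} (hmem : R ∈ A) (hub : ∀ r ∈ A, r ≤ R) :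
    sSup A = R :=
  le_antisymm (csSup_le ⟨R, hmem⟩ hub) (le_csSup ⟨R, hub⟩ hmem)

/-- pigeonhole for frequently over a finite type -/
lemma exists_frequently_eq {Q : Type} [Finite Q] (ρ : ℕ → Q) :
    ∃ q, ∃ᶠ n in atTop, ρ n = q := by
  by_contra h
  push_neg at h
  have h' : ∀ q : Q, ∀ᶠ n in atTop, ρ n ≠ q := by
    intro q
    have := h q
    exact this
  have : ∀ᶠ n in atTop, ∀ q : Q, ρ n ≠ q := Filter.eventually_all.2 h'
  rcases this.exists with ⟨n, hn⟩
  exact hn (ρ n) rfl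

lemma frequently_mem_of_frequently_mem_finite {Q : Type} [Finite Q] (ρ : ℕ → Q) (S : Set Q)
    (h : ∃ᶠ n in atTop, ρ n ∈ S) : ∃ q ∈ S, ∃ᶠ n in atTop, ρ n = q := by
  by_contra hc
  push_neg at hc
  have h' : ∀ᶠ n in atTop, ∀ q : Q, q ∈ S → ρ n ≠ q := by
    apply Filter.eventually_all.2
    intro q
    rcases Classical.em (q ∈ S) with hq | hq
    · have := hc q hq
      filter_upwards [this] with n hn _
      exact hn
    · filter_upwards with n hqq
      exact absurd hqq hq
  rcases (h.and_eventually h').exists with ⟨n, hn1, hn2⟩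
  exact hn2 (ρ n) hn1 rfl

/-- eventually, the sequence is in its set of infinitely-often values -/
lemma eventually_mem_io {Q : Type} [Finite Q] (ρ : ℕ → Q) :
    ∀ᶠ n in atTop, ρ n ∈ {q | ∃ᶠ m in atTop, ρ m = q} := by
  have h' : ∀ᶠ n in atTop, ∀ q : Q, ¬ (∃ᶠ m in atTop, ρ m = q) → ρ n ≠ q := by
    apply Filter.eventually_all.2
    intro q
    rcases Classical.em (∃ᶠ m in atTop, ρ m = q) with hq | hq
    · filter_upwards with n hn
      exact absurd hq hn
    · rw [Filter.not_frequently] at hq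
      filter_upwards [hq] with n hn _
      exact hn
  filter_upwards [h'] with n hn
  by_contra hmem
  exact hn (ρ n) hmem rfl


variable {Alpha Q : Type}

/-! ### pref lemmas -/

lemma pref_zero (π : ℕ → Bool) : DPTA.pref π 0 = [] := rfl

lemma pref_succ (π : ℕ → Bool) (n : ℕ) :
    DPTA.pref π (n + 1) = π 0 :: DPTA.pref (fun i => π (i + 1)) n := by
  simp [DPTA.pref, List.ofFn_succ]

lemma pref_snoc (π : ℕ → Bool) (n : ℕ) :
    DPTA.pref π (n + 1) = DPTA.pref π n ++ [π n] := by
  simp only [DPTA.pref]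
  rw [List.ofFn_succ']
  simp [List.concat_eq_append, Fin.last]

lemma pref_length (π : ℕ → Bool) (n : ℕ) : (DPTA.pref π n).length = n := by
  simp [DPTA.pref]

lemma pref_add (π : ℕ → Bool) (a b : ℕ) :
    DPTA.pref π (a + b) = DPTA.pref π a ++ DPTA.pref (fun i => π (a + i)) b := by
  induction b with
  | zero => simp [pref_zero]
  | succ b ih => rw [← Nat.add_assoc, pref_snoc, ih, pref_snoc, List.append_assoc]

lemma pref_congr {π π' : ℕ → Bool} (n : ℕ) (h : ∀ i < n, π i = π' i) :
    DPTA.pref π n = DPTA.pref π' n := by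
  simp only [DPTA.pref]
  congr 1
  funext i
  exact h i i.isLt

/-! ### runFrom lemmas -/

/-- the subtree of `t` at node `v` -/
def subAt (t : List Bool → Alpha) (v : List Bool) : List Bool → Alpha := fun u => t (v ++ u)

lemma runFrom_append (M : DPTA Alpha Q) (q : Q) (t : List Bool → Alpha) (u v : List Bool) :
    M.runFrom q t (u ++ v) = M.runFrom (M.runFrom q t u) (subAt t u) v := by
  induction u generalizing q t with
  | nil =>
    have h : subAt t [] = t := funext fun u => by simp [subAt]
    rw [h, List.nil_append]
    rfl
  | cons d u ih =>
    show M.runFrom (M.next q (t []) d) (fun w => t (d :: w)) (u ++ v) = _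
    rw [ih]
    have h1 : subAt t (d :: u) = subAt (fun w => t (d :: w)) u := by
      funext w; simp [subAt]
    rw [h1]
    rfl

lemma runFrom_snoc (M : DPTA Alpha Q) (q : Q) (t : List Bool → Alpha) (u : List Bool) (d : Bool) :
    M.runFrom q t (u ++ [d]) = M.next (M.runFrom q t u) (t u) d := by
  rw [runFrom_append]
  show M.next (M.runFrom q t u) (subAt t u []) d = _
  simp [subAt]

lemma runFrom_congr (M : DPTA Alpha Q) (q : Q) (t t' : List Bool → Alpha) (v : List Bool)
    (h : ∀ w, w <+: v → w.length < v.length → t w = t' w) :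
    M.runFrom q t v = M.runFrom q t' v := by
  induction v generalizing q t t' with
  | nil => rfl
  | cons d v ih =>
    show M.runFrom (M.next q (t []) d) (fun w => t (d :: w)) v = _
    have h0 : t [] = t' [] := h [] ⟨d :: v, rfl⟩ (by simp)
    rw [h0]
    apply ih
    intro w hw hlen
    rcases hw with ⟨r, hr⟩
    exact h (d :: w) ⟨r, by rw [← hr]; rfl⟩ (by simpa using hlen)

/-! ### follow / statesOn lemmas -/

lemma follow_nil (M : DPTA Alpha Q) (q : Q) : M.follow q [] = q := rfl

lemma follow_cons (M : DPTA Alpha Q) (q : Q) (s : Alpha × Bool) (l : List (Alpha × Bool)) :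
    M.follow q (s :: l) = M.follow (M.next q s.1 s.2) l := rfl

lemma follow_append (M : DPTA Alpha Q) (q : Q) (l1 l2 : List (Alpha × Bool)) :
    M.follow q (l1 ++ l2) = M.follow (M.follow q l1) l2 := by
  simp [DPTA.follow, List.foldl_append]

lemma follow_snoc (M : DPTA Alpha Q) (q : Q) (l : List (Alpha × Bool)) (s : Alpha × Bool) :
    M.follow q (l ++ [s]) = M.next (M.follow q l) s.1 s.2 := by
  rw [follow_append]; rfl

lemma statesOn_nil (M : DPTA Alpha Q) (q : Q) : M.statesOn q [] = [q] := rfl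

lemma statesOn_cons (M : DPTA Alpha Q) (q : Q) (s : Alpha × Bool) (l : List (Alpha × Bool)) :
    M.statesOn q (s :: l) = q :: M.statesOn (M.next q s.1 s.2) l := by
  simp [DPTA.statesOn, List.scanl_cons]

lemma statesOn_ne_nil (M : DPTA Alpha Q) (q : Q) (l : List (Alpha × Bool)) :
    M.statesOn q l ≠ [] := by
  cases l <;> simp [statesOn_nil, statesOn_cons]

lemma mem_statesOn_iff (M : DPTA Alpha Q) (q p : Q) (l : List (Alpha × Bool)) :
    p ∈ M.statesOn q l ↔ ∃ j ≤ l.length, M.follow q (l.take j) = p := by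
  induction l generalizing q with
  | nil =>
    simp only [statesOn_nil, List.mem_singleton, List.length_nil]
    constructor
    · rintro rfl; exact ⟨0, le_refl _, rfl⟩
    · rintro ⟨j, _, hf⟩
      rw [List.take_nil] at hf
      exact hf.symm
  | cons s l ih =>
    rw [statesOn_cons, List.mem_cons, ih]
    constructor
    · rintro (rfl | ⟨j, hj, hf⟩)
      · exact ⟨0, by simp, rfl⟩
      · exact ⟨j + 1, by simpa using hj, by simpa [List.take_cons, follow_cons] using hf⟩
    · rintro ⟨j, hj, hf⟩
      cases j with
      | zero => left; exact hf.symm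
      | succ j =>
        right
        exact ⟨j, by simpa using hj, by simpa [List.take_cons, follow_cons] using hf⟩

lemma follow_mem_statesOn (M : DPTA Alpha Q) (q : Q) (l : List (Alpha × Bool)) {j : ℕ}
    (hj : j ≤ l.length) : M.follow q (l.take j) ∈ M.statesOn q l :=
  (mem_statesOn_iff M q _ l).2 ⟨j, hj, rfl⟩

lemma self_mem_statesOn (M : DPTA Alpha Q) (q : Q) (l : List (Alpha × Bool)) :
    q ∈ M.statesOn q l := by
  have := follow_mem_statesOn M q l (Nat.zero_le _)
  simpa [follow_nil] using this

lemma rank_le_maxRankOn (M : DPTA Alpha Q) (q p : Q) (l : List (Alpha × Bool))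
    (h : p ∈ M.statesOn q l) : M.rank p ≤ M.maxRankOn q l :=
  le_foldr_max (List.mem_map_of_mem (f := M.rank) h)

lemma maxRankOn_mem (M : DPTA Alpha Q) (q : Q) (l : List (Alpha × Bool)) :
    ∃ p ∈ M.statesOn q l, M.maxRankOn q l = M.rank p := by
  have h := foldr_max_mem (l := (M.statesOn q l).map M.rank)
    (by simp [statesOn_ne_nil])
  rcases List.mem_map.1 h with ⟨p, hp, he⟩
  exact ⟨p, hp, he.symm⟩

lemma rank_self_le_maxRankOn (M : DPTA Alpha Q) (q : Q) (l : List (Alpha × Bool)) :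
    M.rank q ≤ M.maxRankOn q l :=
  rank_le_maxRankOn M q q l (self_mem_statesOn M q l)

/-! ### steps along a path of a run -/

/-- the steps (letter, direction) taken along `π` between positions `n1` and `n1+k` -/
def segSteps (t : List Bool → Alpha) (π : ℕ → Bool) (n1 : ℕ) : ℕ → List (Alpha × Bool)
  | 0 => []
  | k + 1 => segSteps t π n1 k ++ [(t (DPTA.pref π (n1 + k)), π (n1 + k))]

lemma segSteps_length (t : List Bool → Alpha) (π : ℕ → Bool) (n1 k : ℕ) :
    (segSteps t π n1 k).length = k := by
  induction k with
  | zero => rfl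
  | succ k ih => simp [segSteps, ih]

lemma follow_segSteps (M : DPTA Alpha Q) (q0 : Q) (t : List Bool → Alpha) (π : ℕ → Bool)
    (n1 k : ℕ) :
    M.follow (M.runFrom q0 t (DPTA.pref π n1)) (segSteps t π n1 k)
      = M.runFrom q0 t (DPTA.pref π (n1 + k)) := by
  induction k with
  | zero => simp [segSteps, follow_nil, pref_zero]
  | succ k ih =>
    rw [segSteps, follow_append, ih, follow_cons, follow_nil, ← Nat.add_assoc, pref_snoc,
      runFrom_snoc]

lemma segSteps_take (t : List Bool → Alpha) (π : ℕ → Bool) (n1 : ℕ) {j k : ℕ} (hj : j ≤ k) :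
    (segSteps t π n1 k).take j = segSteps t π n1 j := by
  induction k with
  | zero => simp_all [segSteps]
  | succ k ih =>
    rcases Nat.lt_or_ge j (k + 1) with h | h
    · rw [segSteps, List.take_append_of_le_length (by rw [segSteps_length]; omega)]
      exact ih (by omega)
    · have : j = k + 1 := le_antisymm hj h
      subst this
      rw [List.take_of_length_le (by rw [segSteps, List.length_append, segSteps_length]; simp)]

lemma mem_statesOn_segSteps (M : DPTA Alpha Q) (q0 : Q) (t : List Bool → Alpha) (π : ℕ → Bool)
    (n1 k : ℕ) (p : Q) :
    p ∈ M.statesOn (M.runFrom q0 t (DPTA.pref π n1)) (segSteps t π n1 k)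
      ↔ ∃ j ≤ k, M.runFrom q0 t (DPTA.pref π (n1 + j)) = p := by
  rw [mem_statesOn_iff]
  constructor
  · rintro ⟨j, hj, hf⟩
    rw [segSteps_length] at hj
    refine ⟨j, hj, ?_⟩
    rw [segSteps_take t π n1 hj, follow_segSteps] at hf
    exact hf
  · rintro ⟨j, hj, hf⟩
    refine ⟨j, by rw [segSteps_length]; exact hj, ?_⟩
    rw [segSteps_take t π n1 hj, follow_segSteps]
    exact hf

/-! ### the set of i.o. values and its sup -/

lemma freq_rank_set_eq (M : DPTA Alpha Q) [Finite Q] (ρ : ℕ → Q) :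
    {r : ℕ | ∃ᶠ n in Filter.atTop, M.rank (ρ n) = r}
      = M.rank '' {p | ∃ᶠ n in Filter.atTop, ρ n = p} := by
  ext r
  constructor
  · intro hr
    have : ∃ᶠ n in Filter.atTop, ρ n ∈ {p | M.rank p = r} := hr
    rcases frequently_mem_of_frequently_mem_finite ρ _ this with ⟨p, hp1, hp2⟩
    exact ⟨p, hp2, hp1⟩
  · rintro ⟨p, hp, rfl⟩
    exact hp.mono fun n hn => by rw [hn]

/-- the covering lemma: a finite collection of i.o. states is hit in a window -/
lemma covering (ρ : ℕ → Q) (L : List Q) (hL : ∀ p ∈ L, ∃ᶠ n in Filter.atTop, ρ n = p) :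
    ∀ m, ∃ nn ≥ m, ∀ p ∈ L, ∃ j, m ≤ j ∧ j ≤ nn ∧ ρ j = p := by
  induction L with
  | nil => intro m; exact ⟨m, le_refl m, by simp⟩
  | cons p L ih =>
    intro m
    rcases ih (fun p hp => hL p (List.mem_cons_of_mem _ hp)) m with ⟨nn, hnn, hcov⟩
    rcases (Filter.frequently_atTop.1 (hL p List.mem_cons_self) nn) with ⟨j, hj1, hj2⟩
    refine ⟨j, le_trans hnn hj1, ?_⟩
    intro p' hp'
    rcases List.mem_cons.1 hp' with rfl | hp'
    · exact ⟨j, le_trans hnn hj1, le_refl j, hj2⟩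
    · rcases hcov p' hp' with ⟨j', h1, h2, h3⟩
      exact ⟨j', h1, le_trans h2 hj1, h3⟩

/-! ### the Büchi set and the path characterisation -/

/-- The Büchi acceptance set: even-ranked states lying on a loop on which they are maximal. -/
def buchiF (M : DPTA Alpha Q) : Set Q :=
  {p | Even (M.rank p) ∧ ∃ l, M.IsLoop p l ∧ M.maxRankOn p l = M.rank p}

/-- key extraction: a covering loop at any i.o. state -/
lemma covering_loop (M : DPTA Alpha Q) [Finite Q] (q0 : Q) (t : List Bool → Alpha)
    (π : ℕ → Bool) (qs : Q)
    (hqs : ∃ᶠ n in Filter.atTop, M.runFrom q0 t (DPTA.pref π n) = qs) :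
    ∃ l, M.IsLoop qs l ∧
      (∀ p ∈ M.statesOn qs l, p ∈ {p | ∃ᶠ n in Filter.atTop, M.runFrom q0 t (DPTA.pref π n) = p}) ∧
      (∀ p ∈ {p | ∃ᶠ n in Filter.atTop, M.runFrom q0 t (DPTA.pref π n) = p},
        p ∈ M.statesOn qs l) := by
  set ρ := fun n => M.runFrom q0 t (DPTA.pref π n) with hρ
  set S := {p | ∃ᶠ n in Filter.atTop, ρ n = p} with hSdef
  have hSfin : S.Finite := Set.toFinite S
  -- eventually in S
  rcases Filter.eventually_atTop.1 (eventually_mem_io ρ) with ⟨N, hN⟩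
  -- first visit of qs after N
  rcases Filter.frequently_atTop.1 hqs N with ⟨n1, hn1N, hn1⟩
  -- cover S
  have hLfreq : ∀ p ∈ hSfin.toFinset.toList, ∃ᶠ n in Filter.atTop, ρ n = p := by
    intro p hp
    rw [Finset.mem_toList, Set.Finite.mem_toFinset] at hp
    exact hp
  rcases covering ρ hSfin.toFinset.toList hLfreq n1 with ⟨nmid, hnmid, hcov⟩
  -- return to qs strictly after n1 and after nmid
  rcases Filter.frequently_atTop.1 hqs (max nmid (n1 + 1)) with ⟨n2, hn2ge, hn2⟩
  have hn2mid : nmid ≤ n2 := le_trans (le_max_left _ _) hn2ge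
  have hn2gt : n1 < n2 := lt_of_lt_of_le (Nat.lt_succ_self n1) (le_trans (le_max_right _ _) hn2ge)
  set k := n2 - n1 with hk
  have hkpos : 0 < k := Nat.sub_pos_of_lt hn2gt
  have hn1k : n1 + k = n2 := by omega
  refine ⟨segSteps t π n1 k, ⟨?_, ?_⟩, ?_, ?_⟩
  · -- nonempty
    intro hnil
    have := segSteps_length t π n1 k
    rw [hnil] at this
    simp at this
    omega
  · -- follow qs seg = qs
    have := follow_segSteps M q0 t π n1 k
    rw [hn1k] at this
    rw [← hn1]
    rw [this, hn2]
    exact hn1.symm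
  · -- states ⊆ S
    intro p hp
    rw [← hn1] at hp
    rcases (mem_statesOn_segSteps M q0 t π n1 k p).1 hp with ⟨j, _, hj2⟩
    have : ρ (n1 + j) ∈ S := hN (n1 + j) (le_trans hn1N (Nat.le_add_right _ _))
    rwa [show ρ (n1 + j) = p from hj2] at this
  · -- S ⊆ states
    intro p hp
    rw [← hn1]
    apply (mem_statesOn_segSteps M q0 t π n1 k p).2
    have hpL : p ∈ hSfin.toFinset.toList := by
      rw [Finset.mem_toList, Set.Finite.mem_toFinset]
      exact hp
    rcases hcov p hpL with ⟨j, hj1, hj2, hj3⟩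
    exact ⟨j - n1, by omega, by rw [show n1 + (j - n1) = j by omega]; exact hj3⟩

/-- the max rank on a covering loop equals the sup of i.o. ranks -/
lemma maxRankOn_covering (M : DPTA Alpha Q) (qs : Q) (l : List (Alpha × Bool)) (S : Set Q)
    (h1 : ∀ p ∈ M.statesOn qs l, p ∈ S) (h2 : ∀ p ∈ S, p ∈ M.statesOn qs l) :
    sSup (M.rank '' S) = M.maxRankOn qs l := by
  apply sSup_eq_of_mem_of_ub
  · rcases maxRankOn_mem M qs l with ⟨p, hp, he⟩
    exact ⟨p, h1 p hp, he.symm⟩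
  · rintro r ⟨p, hp, rfl⟩
    exact rank_le_maxRankOn M qs p l (h2 p hp)

/-- **Büchi characterisation of parity acceptance along a path**, given no (0,1)-flower. -/
lemma parity_iff_buchi (M : DPTA Alpha Q) [Finite Q] (hnf : ¬ M.HasFlower 0 1) (q0 : Q)
    (t : List Bool → Alpha) (π : ℕ → Bool) :
    (ParityAccept fun n => M.rank (M.runFrom q0 t (DPTA.pref π n)))
      ↔ ∃ᶠ n in Filter.atTop, M.runFrom q0 t (DPTA.pref π n) ∈ buchiF M := by
  set ρ := fun n => M.runFrom q0 t (DPTA.pref π n) with hρ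
  set S := {p | ∃ᶠ n in Filter.atTop, ρ n = p} with hSdef
  have hSne : S.Nonempty := exists_frequently_eq ρ
  have hRset : {r : ℕ | ∃ᶠ n in Filter.atTop, M.rank (M.runFrom q0 t (DPTA.pref π n)) = r}
      = M.rank '' S := freq_rank_set_eq M ρ
  have hPA : (ParityAccept fun n => M.rank (M.runFrom q0 t (DPTA.pref π n)))
      ↔ Even (sSup (M.rank '' S)) := by
    rw [show (ParityAccept fun n => M.rank (M.runFrom q0 t (DPTA.pref π n)))
        = Even (sSup {r : ℕ | ∃ᶠ n in Filter.atTop,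
            M.rank (M.runFrom q0 t (DPTA.pref π n)) = r}) from rfl, hRset]
  set R := sSup (M.rank '' S) with hR
  have hRmem : R ∈ M.rank '' S :=
    Nat.sSup_mem (hSne.image M.rank) (Set.Finite.bddAbove (Set.toFinite _))
  constructor
  · intro hacc
    have hReven : Even R := hPA.1 hacc
    rcases hRmem with ⟨qs, hqsS, hqsR⟩
    rcases covering_loop M q0 t π qs hqsS with ⟨l, hloop, hsub, hsup⟩
    have hmax : R = M.maxRankOn qs l := maxRankOn_covering M qs l S hsub hsup
    have hqsF : qs ∈ buchiF M := by
      refine ⟨by rw [hqsR]; exact hReven, l, hloop, ?_⟩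
      rw [← hmax, hqsR]
    exact hqsS.mono fun n hn => by
      rw [show M.runFrom q0 t (DPTA.pref π n) = qs from hn]; exact hqsF
  · intro hfreq
    rcases frequently_mem_of_frequently_mem_finite ρ (buchiF M) hfreq with ⟨p, hpF, hpfreq⟩
    have hpS : p ∈ S := hpfreq
    rcases covering_loop M q0 t π p hpfreq with ⟨lS, hloopS, hsub, hsup⟩
    have hmax : R = M.maxRankOn p lS := maxRankOn_covering M p lS S hsub hsup
    rcases hpF with ⟨hpev, le, hle, hlemax⟩
    apply hPA.2
    by_contra hodd
    -- R is odd, rank p even, rank p ≤ R, so rank p < R : flower!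
    have hrankle : M.rank p ≤ R := by
      apply le_csSup (Set.Finite.bddAbove (Set.toFinite _))
      exact ⟨p, hpS, rfl⟩
    have hpev2 : M.rank p % 2 = 0 := Nat.even_iff.1 hpev
    have hodd2 : R % 2 = 1 := Nat.odd_iff.1 (Nat.not_even_iff_odd.1 hodd)
    have hlt : M.rank p < R := by
      rcases lt_or_eq_of_le hrankle with h | h
      · exact h
      · rw [h] at hpev2; omega
    apply hnf
    refine ⟨p, fun j => if j = 0 then le else lS, ?_, ?_⟩
    · intro j h0 h1
      interval_cases j
      · show M.IsLoop p (if 0 = 0 then le else lS) ∧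
          M.maxRankOn p (if 0 = 0 then le else lS) % 2 = 0 % 2
        rw [if_pos rfl, hlemax]
        exact ⟨hle, hpev2⟩
      · show M.IsLoop p (if 1 = 0 then le else lS) ∧
          M.maxRankOn p (if 1 = 0 then le else lS) % 2 = 1 % 2
        rw [if_neg (by omega : ¬(1 = 0)), ← hmax]
        exact ⟨hloopS, hodd2⟩
    · intro j h0 h1
      interval_cases j
      show M.maxRankOn p (if 0 = 0 then le else lS)
        < M.maxRankOn p (if 0 + 1 = 0 then le else lS)
      rw [if_pos rfl, if_neg (by omega : ¬(0 + 1 = 0)), hlemax, ← hmax]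
      exact hlt

/-! ### the Π⁰₂ construction -/

section Pi02Dir

variable [TopologicalSpace Alpha] [DiscreteTopology Alpha]

/-- the approximating open sets -/
def Uset (M : DPTA Alpha Q) (n : ℕ) : Set (List Bool → Alpha) :=
  {t | ∀ π : ℕ → Bool, ∃ m, n ≤ m ∧ M.run t (DPTA.pref π m) ∈ buchiF M}

/-- finite-depth approximations -/
def Vset (M : DPTA Alpha Q) (n MM : ℕ) : Set (List Bool → Alpha) :=
  {t | ∀ v : List Bool, v.length = MM →
    ∃ u, u <+: v ∧ n ≤ u.length ∧ M.run t u ∈ buchiF M}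

lemma Vset_isOpen (M : DPTA Alpha Q) (n MM : ℕ) : IsOpen (Vset M n MM) := by
  rw [isOpen_iff_forall_mem_open]
  intro t ht
  refine ⟨⋂ w ∈ {w : List Bool | w.length < MM}, {t' | t' w = t w}, ?_, ?_, ?_⟩
  · intro t' ht'
    simp only [Set.mem_iInter] at ht'
    intro v hv
    rcases ht v hv with ⟨u, hu1, hu2, hu3⟩
    refine ⟨u, hu1, hu2, ?_⟩
    have : M.runFrom M.init t' u = M.runFrom M.init t u := by
      apply runFrom_congr
      intro w hw hlen
      have hwlen : w.length < MM := by
        have := hu1.length_le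
        omega
      exact ht' w hwlen
    rw [DPTA.run, this]
    exact hu3
  · apply Set.Finite.isOpen_biInter (List.finite_length_lt Bool MM)
    intro w _
    have hcont : Continuous fun t' : List Bool → Alpha => t' w := continuous_apply w
    exact IsOpen.preimage hcont (isOpen_discrete {t w})
  · simp only [Set.mem_iInter]
    intro w _
    rfl

lemma prefix_pref {π : ℕ → Bool} {m : ℕ} {u : List Bool} (hu : u <+: DPTA.pref π m) :
    u = DPTA.pref π u.length := by
  have hlen : u.length ≤ m := by
    have := hu.length_le
    rwa [pref_length] at this
  have h2 : DPTA.pref π u.length <+: DPTA.pref π m := by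
    rw [show m = u.length + (m - u.length) by omega, pref_add]
    exact List.prefix_append _ _
  rcases List.prefix_or_prefix_of_prefix hu h2 with h | h
  · exact h.eq_of_length (by rw [pref_length])
  · exact (h.eq_of_length (by rw [pref_length])).symm

lemma Uset_eq_union (M : DPTA Alpha Q) (n : ℕ) : Uset M n = ⋃ MM, Vset M n MM := by
  ext t
  constructor
  · -- König's lemma direction
    intro ht
    by_contra hc
    simp only [Set.mem_iUnion] at hc
    push_neg at hc
    -- bad nodes
    set Bad : Set (List Bool) :=
      {v | ∀ u, u <+: v → n ≤ u.length → M.run t u ∉ buchiF M} with hBad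
    have hBadPref : ∀ v ∈ Bad, ∀ w, w <+: v → w ∈ Bad := by
      intro v hv w hwv u huw hun
      exact hv u (huw.trans hwv) hun
    have hBadLong : ∀ MM, ∃ v ∈ Bad, v.length = MM := by
      intro MM
      have := hc MM
      simp only [Vset, Set.mem_setOf_eq] at this
      push_neg at this
      rcases this with ⟨v, hv1, hv2⟩
      exact ⟨v, fun u hu hn => hv2 u hu hn, hv1⟩
    -- arbitrarily long bad extensions
    set I : List Bool → Prop := fun w => ∀ MM, ∃ v ∈ Bad, w <+: v ∧ MM ≤ v.length with hI
    have hI0 : I [] := by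
      intro MM
      rcases hBadLong MM with ⟨v, hv1, hv2⟩
      exact ⟨v, hv1, List.nil_prefix, by omega⟩
    have hIstep : ∀ w, I w → ∃ d, I (w ++ [d]) := by
      intro w hw
      by_contra hcd
      push_neg at hcd
      have hcd' : ∀ d : Bool, ∃ MMd, ∀ v ∈ Bad, (w ++ [d]) <+: v → v.length < MMd := by
        intro d
        have := hcd d
        simp only [hI] at this
        push_neg at this
        rcases this with ⟨MMd, hMMd⟩
        exact ⟨MMd, fun v hv hpre => by
          by_contra hge
          exact absurd (hMMd v hv hpre) (by omega)⟩
      rcases hcd' false with ⟨Mf, hMf⟩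
      rcases hcd' true with ⟨Mt, hMt⟩
      rcases hw (Mf + Mt + w.length + 1) with ⟨v, hv1, hv2, hv3⟩
      rcases hv2 with ⟨r, hr⟩
      have hrne : r ≠ [] := by
        intro h
        rw [h, List.append_nil] at hr
        subst hr
        omega
      rcases List.exists_cons_of_ne_nil hrne with ⟨d, r', hdr⟩
      have hpre : (w ++ [d]) <+: v := by
        rw [← hr, hdr]
        exact ⟨r', by simp⟩
      cases d
      · have := hMf v hv1 hpre; omega
      · have := hMt v hv1 hpre; omega
    -- build the bad infinite path
    classical
    set nextd : List Bool → Bool := fun w =>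
      if h : ∃ d, I (w ++ [d]) then h.choose else false with hnextd
    set g : ℕ → List Bool := fun k => Nat.rec [] (fun _ gk => gk ++ [nextd gk]) k with hg
    have hgsucc : ∀ k, g (k + 1) = g k ++ [nextd (g k)] := fun k => rfl
    have hgI : ∀ k, I (g k) := by
      intro k
      induction k with
      | zero => exact hI0
      | succ k ih =>
        rw [hgsucc]
        have hex : ∃ d, I (g k ++ [d]) := hIstep (g k) ih
        rw [hnextd]
        simp only [dif_pos hex]
        exact hex.choose_spec
    have hglen : ∀ k, (g k).length = k := by
      intro k
      induction k with
      | zero => rfl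
      | succ k ih => rw [hgsucc]; simp [ih]
    have hgBad : ∀ k, g k ∈ Bad := by
      intro k
      rcases hgI k 0 with ⟨v, hv1, hv2, _⟩
      exact hBadPref v hv1 _ hv2
    set π : ℕ → Bool := fun k => nextd (g k) with hπ
    have hpg : ∀ k, DPTA.pref π k = g k := by
      intro k
      induction k with
      | zero => rfl
      | succ k ih => rw [pref_snoc, ih, hgsucc]
    rcases ht π with ⟨m, hm1, hm2⟩
    rw [hpg m] at hm2
    exact hgBad m (g m) (List.prefix_refl _) (by rw [hglen]; exact hm1) hm2
  · rintro ht
    simp only [Set.mem_iUnion] at ht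
    rcases ht with ⟨MM, hMM⟩
    intro π
    rcases hMM (DPTA.pref π MM) (pref_length π MM) with ⟨u, hu1, hu2, hu3⟩
    refine ⟨u.length, hu2, ?_⟩
    rw [← prefix_pref hu1]
    exact hu3

/-- ⇐ direction of the theorem: no flower implies `Π⁰₂`. -/
lemma isPi02_of_noflower (M : DPTA Alpha Q) [Finite Q] (hnf : ¬ M.HasFlower 0 1) :
    ∃ f : ℕ → Set (List Bool → Alpha), (∀ n, IsOpen (f n)) ∧ M.Lang = ⋂ n, f n := by
  refine ⟨Uset M, fun n => ?_, ?_⟩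
  · rw [Uset_eq_union]
    exact isOpen_iUnion fun MM => Vset_isOpen M n MM
  · ext t
    simp only [Set.mem_iInter]
    constructor
    · intro ht n
      intro π
      have := (parity_iff_buchi M hnf M.init t π).1 (ht π)
      rcases Filter.frequently_atTop.1 this n with ⟨m, hm1, hm2⟩
      exact ⟨m, hm1, hm2⟩
    · intro ht π
      apply (parity_iff_buchi M hnf M.init t π).2
      apply Filter.frequently_atTop.2
      intro n
      rcases ht n π with ⟨m, hm1, hm2⟩
      exact ⟨m, hm1, hm2⟩

end Pi02Dir

/-! ### shift invariance of parity acceptance, subtree acceptance -/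

lemma freq_set_shift (f : ℕ → ℕ) (k : ℕ) :
    {r : ℕ | ∃ᶠ n in Filter.atTop, f (k + n) = r} = {r : ℕ | ∃ᶠ n in Filter.atTop, f n = r} := by
  ext r
  simp only [Set.mem_setOf_eq, Filter.frequently_atTop]
  constructor
  · intro h N
    rcases h N with ⟨n, hn1, hn2⟩
    exact ⟨k + n, by omega, hn2⟩
  · intro h N
    rcases h (N + k) with ⟨n, hn1, hn2⟩
    exact ⟨n - k, by omega, by rw [show k + (n - k) = n by omega]; exact hn2⟩

lemma parityAccept_shift {f g : ℕ → ℕ} (k : ℕ) (h : ∀ n, g n = f (k + n)) :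
    ParityAccept g ↔ ParityAccept f := by
  unfold ParityAccept
  rw [show {r : ℕ | ∃ᶠ n in Filter.atTop, g n = r}
      = {r : ℕ | ∃ᶠ n in Filter.atTop, f (k + n) = r} by
    ext r; simp only [Set.mem_setOf_eq, h], freq_set_shift f k]

/-- acceptance is inherited by subtrees along the run -/
lemma acceptsFrom_subAt (M : DPTA Alpha Q) {q : Q} {t : List Bool → Alpha}
    (h : M.AcceptsFrom q t) (v : List Bool) :
    M.AcceptsFrom (M.runFrom q t v) (subAt t v) := by
  intro π
  classical
  set L := v.length with hL
  set π' : ℕ → Bool := fun n => if hn : n < L then v.get ⟨n, hn⟩ else π (n - L) with hπ'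
  have hprefv : DPTA.pref π' L = v := by
    have : DPTA.pref π' L = List.ofFn (fun i : Fin L => v.get i) := by
      simp only [DPTA.pref]
      congr 1
      funext i
      simp only [hπ', dif_pos i.isLt]
      rfl
    rw [this]
    exact List.ofFn_get v
  have hshift : (fun i => π' (L + i)) = π := by
    funext i
    simp only [hπ', dif_neg (by omega : ¬ (L + i < L))]
    congr 1
    omega
  have hkey : ∀ m, M.runFrom (M.runFrom q t v) (subAt t v) (DPTA.pref π m)
      = M.runFrom q t (DPTA.pref π' (L + m)) := by
    intro m
    rw [pref_add, hprefv, hshift, runFrom_append]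
  refine (parityAccept_shift L ?_).2 (h π')
  intro n
  rw [hkey]

/-! ### the all-rejecting sink -/

lemma next_of_self_loop (M : DPTA Alpha Q) {qb : Q} (hb : ∀ s, M.delta qb s = (qb, qb))
    (s : Alpha) (d : Bool) : M.next qb s d = qb := by
  unfold DPTA.next
  rw [hb s]
  cases d <;> rfl

lemma follow_of_self_loop (M : DPTA Alpha Q) {qb : Q} (hb : ∀ s, M.delta qb s = (qb, qb))
    (l : List (Alpha × Bool)) : M.follow qb l = qb := by
  induction l with
  | nil => rfl
  | cons s l ih => rw [follow_cons, next_of_self_loop M hb]; exact ih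

lemma maxRankOn_cons (M : DPTA Alpha Q) (q : Q) (s : Alpha × Bool) (l : List (Alpha × Bool)) :
    M.maxRankOn q (s :: l) = max (M.rank q) (M.maxRankOn (M.next q s.1 s.2) l) := by
  simp [DPTA.maxRankOn, statesOn_cons]

lemma maxRankOn_of_self_loop (M : DPTA Alpha Q) {qb : Q} (hb : ∀ s, M.delta qb s = (qb, qb))
    (l : List (Alpha × Bool)) : M.maxRankOn qb l = M.rank qb := by
  induction l with
  | nil => simp [DPTA.maxRankOn, statesOn_nil]
  | cons s l ih => rw [maxRankOn_cons, next_of_self_loop M hb, ih, max_self]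

/-- the flower state cannot be the sink -/
lemma flower_ne_sink (M : DPTA Alpha Q) {q : Q} {l0 l1 : List (Alpha × Bool)}
    (h0 : M.maxRankOn q l0 % 2 = 0) (h1 : M.maxRankOn q l1 % 2 = 1)
    (hb : ∀ s, M.delta q s = (q, q)) : False := by
  rw [maxRankOn_of_self_loop M hb] at h0 h1
  omega

/-! ### the gadget tree for the hardness direction -/

/-- head with default -/
def hdS (a0 : Alpha) (l : List (Alpha × Bool)) : Alpha × Bool := l.headD (a0, false)

/-- shift of a bit sequence -/
def shf (x : ℕ → Bool) : ℕ → Bool := fun i => x (i + 1)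

def shk (k : ℕ) (x : ℕ → Bool) : ℕ → Bool := fun i => x (k + i)

/-- refill the pending list of steps from the next loop when exhausted -/
def refillP (bl : Bool → List (Alpha × Bool)) (l : List (Alpha × Bool)) (x : ℕ → Bool) :
    List (Alpha × Bool) × (ℕ → Bool) :=
  match l with
  | [] => (bl (x 0), shf x)
  | s :: l' => (s :: l', x)

/-- the gadget tree: along the main path follow pending steps, refilling with loop
`bl (x k)` at stage `k`; off the main path plug in the trees given by `acc`. -/
def mk2 (M : DPTA Alpha Q) (acc : Q → List Bool → Alpha) (bl : Bool → List (Alpha × Bool))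
    (a0 : Alpha) : List (Alpha × Bool) → (ℕ → Bool) → Q → List Bool → Alpha
  | l, _, _, [] => (hdS a0 l).1
  | l, x, p, d :: v =>
    if d = (hdS a0 l).2 then
      mk2 M acc bl a0 (refillP bl l.tail x).1 (refillP bl l.tail x).2
        (M.next p (hdS a0 l).1 d) v
    else acc (M.next p (hdS a0 l).1 d) v

/-- the state along the main path -/
def stt (M : DPTA Alpha Q) (bl : Bool → List (Alpha × Bool)) (a0 : Alpha) :
    List (Alpha × Bool) → (ℕ → Bool) → Q → ℕ → Q
  | _, _, p, 0 => p
  | l, x, p, n + 1 =>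
    stt M bl a0 (refillP bl l.tail x).1 (refillP bl l.tail x).2
      (M.next p (hdS a0 l).1 (hdS a0 l).2) n

/-- the step (letter, direction) of the main path at stage `n` -/
def ltr (bl : Bool → List (Alpha × Bool)) (a0 : Alpha) :
    List (Alpha × Bool) → (ℕ → Bool) → ℕ → Alpha × Bool
  | l, _, 0 => hdS a0 l
  | l, x, n + 1 => ltr bl a0 (refillP bl l.tail x).1 (refillP bl l.tail x).2 n

/-- the main path node at depth `n` -/
def ndl (bl : Bool → List (Alpha × Bool)) (a0 : Alpha) (l : List (Alpha × Bool))
    (x : ℕ → Bool) (n : ℕ) : List Bool :=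
  DPTA.pref (fun i => (ltr bl a0 l x i).2) n

section Gadget

variable (M : DPTA Alpha Q) (acc : Q → List Bool → Alpha) (bl : Bool → List (Alpha × Bool))
  (a0 : Alpha)

lemma ltr_shift (l : List (Alpha × Bool)) (x : ℕ → Bool) :
    (fun i => ltr bl a0 l x (i + 1)) = ltr bl a0 (refillP bl l.tail x).1 (refillP bl l.tail x).2 :=
  funext fun i => rfl

lemma refillP_nil (x : ℕ → Bool) : refillP bl [] x = (bl (x 0), shf x) := rfl

lemma refillP_cons (s : Alpha × Bool) (l : List (Alpha × Bool)) (x : ℕ → Bool) :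
    refillP bl (s :: l) x = (s :: l, x) := rfl

lemma ndl_succ (l : List (Alpha × Bool)) (x : ℕ → Bool) (n : ℕ) :
    ndl bl a0 l x (n + 1)
      = (hdS a0 l).2 :: ndl bl a0 (refillP bl l.tail x).1 (refillP bl l.tail x).2 n := by
  show DPTA.pref (fun i => (ltr bl a0 l x i).2) (n + 1) = _
  rw [pref_succ]
  rfl

lemma stt_succ (l : List (Alpha × Bool)) (x : ℕ → Bool) (p : Q) (n : ℕ) :
    stt M bl a0 l x p (n + 1)
      = M.next (stt M bl a0 l x p n) (ltr bl a0 l x n).1 (ltr bl a0 l x n).2 := by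
  induction n generalizing l x p with
  | zero => rfl
  | succ n ih =>
    rw [show stt M bl a0 l x p (n + 1 + 1)
        = stt M bl a0 (refillP bl l.tail x).1 (refillP bl l.tail x).2
            (M.next p (hdS a0 l).1 (hdS a0 l).2) (n + 1) from rfl, ih]
    rfl

lemma runFrom_mk2 (n : ℕ) : ∀ (l : List (Alpha × Bool)) (x : ℕ → Bool) (p : Q),
    M.runFrom p (mk2 M acc bl a0 l x p) (ndl bl a0 l x n) = stt M bl a0 l x p n := by
  induction n with
  | zero => intro l x p; rfl
  | succ n ih =>
    intro l x p
    rw [ndl_succ]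
    show M.runFrom (M.next p (mk2 M acc bl a0 l x p []) (hdS a0 l).2)
        (fun u => mk2 M acc bl a0 l x p ((hdS a0 l).2 :: u)) _ = _
    have h1 : mk2 M acc bl a0 l x p [] = (hdS a0 l).1 := rfl
    have h2 : (fun u => mk2 M acc bl a0 l x p ((hdS a0 l).2 :: u))
        = mk2 M acc bl a0 (refillP bl l.tail x).1 (refillP bl l.tail x).2
            (M.next p (hdS a0 l).1 (hdS a0 l).2) := by
      funext u
      show (if (hdS a0 l).2 = (hdS a0 l).2 then _ else _) = _
      rw [if_pos rfl]
    rw [h1, h2, ih]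
    rfl

lemma mk2_off (n : ℕ) : ∀ (l : List (Alpha × Bool)) (x : ℕ → Bool) (p : Q) (d : Bool),
    d ≠ (ltr bl a0 l x n).2 →
    (fun u => mk2 M acc bl a0 l x p (ndl bl a0 l x n ++ d :: u))
      = acc (M.next (stt M bl a0 l x p n) (ltr bl a0 l x n).1 d) := by
  induction n with
  | zero =>
    intro l x p d hd
    funext u
    have hd' : d ≠ (hdS a0 l).2 := hd
    show (if d = (hdS a0 l).2 then _ else _) = _
    rw [if_neg hd']
    rfl
  | succ n ih =>
    intro l x p d hd
    rw [ndl_succ]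
    funext u
    show (if (hdS a0 l).2 = (hdS a0 l).2 then _ else _) = _
    rw [if_pos rfl]
    have := ih (refillP bl l.tail x).1 (refillP bl l.tail x).2
      (M.next p (hdS a0 l).1 (hdS a0 l).2) d hd
    exact congrFun this u

lemma mk2_nd (n : ℕ) : ∀ (l : List (Alpha × Bool)) (x : ℕ → Bool) (p : Q),
    mk2 M acc bl a0 l x p (ndl bl a0 l x n) = (ltr bl a0 l x n).1 := by
  induction n with
  | zero => intro l x p; rfl
  | succ n ih =>
    intro l x p
    rw [ndl_succ]
    show (if (hdS a0 l).2 = (hdS a0 l).2 then _ else _) = _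
    rw [if_pos rfl]
    exact ih _ _ _

lemma mk2_congr (v : List Bool) : ∀ (l : List (Alpha × Bool)) (x x' : ℕ → Bool) (p : Q),
    (∀ i ≤ v.length, x i = x' i) →
    mk2 M acc bl a0 l x p v = mk2 M acc bl a0 l x' p v := by
  induction v with
  | nil => intro l x x' p _; rfl
  | cons d v ih =>
    intro l x x' p hxx
    show (if d = (hdS a0 l).2 then _ else _) = (if d = (hdS a0 l).2 then _ else _)
    by_cases hd : d = (hdS a0 l).2
    · rw [if_pos hd, if_pos hd]
      cases hlt : l.tail with
      | nil =>
        simp only [refillP_nil]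
        rw [show x 0 = x' 0 from hxx 0 (by omega)]
        apply ih
        intro i hi
        exact hxx (i + 1) (by simp; omega)
      | cons s' l'' =>
        simp only [refillP_cons]
        apply ih
        intro i hi
        exact hxx i (by simp; omega)
    · rw [if_neg hd, if_neg hd]

lemma stt_append : ∀ (l : List (Alpha × Bool)), l ≠ [] → ∀ (x : ℕ → Bool) (p : Q) (m : ℕ),
    stt M bl a0 l x p (l.length + m) = stt M bl a0 (bl (x 0)) (shf x) (M.follow p l) m := by
  intro l
  induction l with
  | nil => intro h; exact absurd rfl h
  | cons s l' ih =>
    intro _ x p m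
    rw [show (s :: l').length + m = (l'.length + m) + 1 by simp; omega]
    show stt M bl a0 (refillP bl l' x).1 (refillP bl l' x).2
        (M.next p s.1 s.2) (l'.length + m) = _
    cases l' with
    | nil =>
      show stt M bl a0 (bl (x 0)) (shf x) (M.next p s.1 s.2) (0 + m) = _
      rw [Nat.zero_add]
      rfl
    | cons s' l'' =>
      rw [show refillP bl (s' :: l'') x = (s' :: l'', x) from rfl]
      rw [ih (by simp) x (M.next p s.1 s.2) m]
      rfl

lemma stt_take : ∀ (j : ℕ) (l : List (Alpha × Bool)) (x : ℕ → Bool) (p : Q), j ≤ l.length →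
    stt M bl a0 l x p j = M.follow p (l.take j) := by
  intro j
  induction j with
  | zero => intro l x p _; rfl
  | succ j ih =>
    intro l x p hj
    match l with
    | [] => simp at hj
    | s :: l' =>
      show stt M bl a0 (refillP bl l' x).1 (refillP bl l' x).2 (M.next p s.1 s.2) j = _
      cases l' with
      | nil =>
        simp only [List.length_cons, List.length_nil] at hj
        have : j = 0 := by omega
        subst this
        rfl
      | cons s' l'' =>
        rw [show refillP bl (s' :: l'') x = (s' :: l'', x) from rfl]
        rw [ih (s' :: l'') x (M.next p s.1 s.2) (by simpa using hj)]
        rfl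

end Gadget

/-! ### block analysis of the main path -/

/-- block offsets -/
def Ofs (bl : Bool → List (Alpha × Bool)) (x : ℕ → Bool) : ℕ → ℕ
  | 0 => 0
  | k + 1 => Ofs bl x k + (bl (x k)).length

/-- the state sequence along the loops, started at `q` -/
def sgm (M : DPTA Alpha Q) (bl : Bool → List (Alpha × Bool)) (a0 : Alpha) (q : Q)
    (x : ℕ → Bool) (m : ℕ) : Q :=
  stt M bl a0 (bl (x 0)) (shf x) q m

section Blocks

variable (M : DPTA Alpha Q) (bl : Bool → List (Alpha × Bool)) (a0 : Alpha) (q : Q)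
  (hbl : ∀ c, bl c ≠ []) (hloopf : ∀ c, M.follow q (bl c) = q)

lemma shf_shk (k : ℕ) (x : ℕ → Bool) : shf (shk k x) = shk (k + 1) x :=
  funext fun i => congrArg x (by omega)

include hbl hloopf in
lemma sgm_block (x : ℕ → Bool) (k : ℕ) : ∀ m,
    sgm M bl a0 q x (Ofs bl x k + m) = sgm M bl a0 q (shk k x) m := by
  induction k with
  | zero =>
    intro m
    show sgm M bl a0 q x (0 + m) = _
    rw [Nat.zero_add]
    have : shk 0 x = x := funext fun i => congrArg x (by omega)
    rw [this]
  | succ k ih =>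
    intro m
    have h1 : Ofs bl x (k + 1) + m = Ofs bl x k + ((bl (x k)).length + m) := by
      show Ofs bl x k + (bl (x k)).length + m = _
      omega
    rw [h1, ih]
    have h2 : (bl (x k)).length = (bl (shk k x 0)).length := rfl
    show stt M bl a0 (bl (shk k x 0)) (shf (shk k x)) q ((bl (x k)).length + m) = _
    rw [h2, stt_append M bl a0 _ (hbl _) (shf (shk k x)) q m, hloopf]
    show sgm M bl a0 q (shf (shk k x)) m = _
    rw [shf_shk]

lemma sgm_mem (x : ℕ → Bool) {j : ℕ} (hj : j ≤ (bl (x 0)).length) :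
    sgm M bl a0 q x j ∈ M.statesOn q (bl (x 0)) := by
  rw [sgm, stt_take M bl a0 j _ (shf x) q hj]
  exact follow_mem_statesOn M q _ hj

include hbl hloopf in
lemma sgm_block_mem (x : ℕ → Bool) (k : ℕ) {j : ℕ} (hj : j ≤ (bl (x k)).length) :
    sgm M bl a0 q x (Ofs bl x k + j) ∈ M.statesOn q (bl (x k)) := by
  rw [sgm_block M bl a0 q hbl hloopf x k j]
  exact sgm_mem M bl a0 q (shk k x) hj

include hbl in
lemma Ofs_ge (x : ℕ → Bool) (k : ℕ) : k ≤ Ofs bl x k := by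
  induction k with
  | zero => omega
  | succ k ih =>
    have : 0 < (bl (x k)).length := List.length_pos_iff.2 (hbl _)
    show k + 1 ≤ Ofs bl x k + (bl (x k)).length
    omega

lemma Ofs_mono (x : ℕ → Bool) {k k' : ℕ} (h : k ≤ k') : Ofs bl x k ≤ Ofs bl x k' := by
  induction k' with
  | zero =>
    have hk : k = 0 := Nat.le_zero.1 h
    subst hk
    exact le_refl _
  | succ k' ih =>
    rcases Nat.lt_or_ge k (k' + 1) with h' | h'
    · have h1 := ih (by omega)
      have h2 : Ofs bl x k' ≤ Ofs bl x (k' + 1) := by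
        show _ ≤ Ofs bl x k' + _
        omega
      omega
    · have : k = k' + 1 := by omega
      subst this
      rfl

include hbl in
lemma exists_block (x : ℕ → Bool) (m : ℕ) :
    ∃ k j, m = Ofs bl x k + j ∧ j < (bl (x k)).length := by
  induction m with
  | zero => exact ⟨0, 0, rfl, List.length_pos_iff.2 (hbl _)⟩
  | succ m ih =>
    rcases ih with ⟨k, j, hm, hj⟩
    rcases Nat.lt_or_ge (j + 1) (bl (x k)).length with h | h
    · exact ⟨k, j + 1, by omega, h⟩
    · refine ⟨k + 1, 0, ?_, List.length_pos_iff.2 (hbl _)⟩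
      show m + 1 = Ofs bl x k + (bl (x k)).length + 0
      omega

lemma block_ge (x : ℕ → Bool) {m k j K : ℕ} (hm : m = Ofs bl x k + j)
    (hj : j < (bl (x k)).length) (hK : Ofs bl x K ≤ m) : K ≤ k := by
  by_contra hc
  have h1 : Ofs bl x (k + 1) ≤ Ofs bl x K := Ofs_mono bl x (by omega)
  have h2 : Ofs bl x (k + 1) = Ofs bl x k + (bl (x k)).length := rfl
  omega

include hbl hloopf in
lemma max_attained (x : ℕ → Bool) (k : ℕ) :
    ∃ j ≤ (bl (x k)).length,
      M.rank (sgm M bl a0 q x (Ofs bl x k + j)) = M.maxRankOn q (bl (x k)) := by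
  rcases maxRankOn_mem M q (bl (x k)) with ⟨p, hp, hpe⟩
  rcases (mem_statesOn_iff M q p (bl (x k))).1 hp with ⟨j, hj, hf⟩
  refine ⟨j, hj, ?_⟩
  rw [sgm_block M bl a0 q hbl hloopf x k j]
  show M.rank (stt M bl a0 (bl (shk k x 0)) (shf (shk k x)) q j) = _
  rw [stt_take M bl a0 j (bl (shk k x 0)) (shf (shk k x)) q hj]
  show M.rank (M.follow q ((bl (x k)).take j)) = _
  rw [hf, hpe]

end Blocks

section MainPath

variable (M : DPTA Alpha Q) (bl : Bool → List (Alpha × Bool)) (a0 : Alpha) (q : Q)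
  (steps0 : List (Alpha × Bool))
  (hbl : ∀ c, bl c ≠ []) (hloopf : ∀ c, M.follow q (bl c) = q)
  (hs0 : steps0 ≠ []) (hs0f : M.follow M.init steps0 = q)

include hs0 hs0f in
lemma rho_sgm (x : ℕ → Bool) (m : ℕ) :
    stt M bl a0 steps0 x M.init (steps0.length + m) = sgm M bl a0 q x m := by
  rw [stt_append M bl a0 steps0 hs0 x M.init m, hs0f]
  rfl

include hbl hloopf hs0 hs0f in
/-- on the main path, infinitely many `true` blocks force the odd value `maxRankOn q (bl true)`
to be the largest rank seen infinitely often -/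
lemma main_sup (x : ℕ → Bool) (K : ℕ) (hup : ∀ k, K ≤ k → (x k = true → False) → x k = false)
    (R : ℕ) (hR : R = M.maxRankOn q (bl true) ∨
      (R = M.maxRankOn q (bl false) ∧ ∀ k, K ≤ k → x k = false))
    (hfreq : ∀ N, ∃ n, N ≤ n ∧ M.rank (stt M bl a0 steps0 x M.init n) = R)
    (hbound : ∀ r, (∃ᶠ n in Filter.atTop, M.rank (stt M bl a0 steps0 x M.init n) = r) → r ≤ R) :
    sSup {r : ℕ | ∃ᶠ n in Filter.atTop, M.rank (stt M bl a0 steps0 x M.init n) = r} = R := by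
  apply sSup_eq_of_mem_of_ub
  · exact Filter.frequently_atTop.2 hfreq
  · exact hbound

end MainPath

section MainAccept

variable (M : DPTA Alpha Q) (bl : Bool → List (Alpha × Bool)) (a0 : Alpha) (q : Q)
  (steps0 : List (Alpha × Bool))
  (hbl : ∀ c, bl c ≠ []) (hloopf : ∀ c, M.follow q (bl c) = q)
  (hs0 : steps0 ≠ []) (hs0f : M.follow M.init steps0 = q)

include hbl hloopf hs0 hs0f in
lemma rank_bound (x : ℕ → Bool) (K : ℕ) (r : ℕ)
    (hfr : ∃ᶠ n in Filter.atTop, M.rank (stt M bl a0 steps0 x M.init n) = r) :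
    ∃ k, K ≤ k ∧ r ≤ M.maxRankOn q (bl (x k)) := by
  rcases Filter.frequently_atTop.1 hfr (steps0.length + Ofs bl x K) with ⟨n, hn1, hn2⟩
  set m := n - steps0.length with hm
  have hnm : n = steps0.length + m := by omega
  rw [hnm, rho_sgm M bl a0 q steps0 hs0 hs0f x m] at hn2
  rcases exists_block bl hbl x m with ⟨k, j, hkj, hj⟩
  have hKk : K ≤ k := block_ge bl x hkj hj (by omega)
  refine ⟨k, hKk, ?_⟩
  rw [← hn2, hkj]
  exact rank_le_maxRankOn M q _ _ (sgm_block_mem M bl a0 q hbl hloopf x k (le_of_lt hj))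

include hbl hloopf hs0 hs0f in
lemma rank_freq (x : ℕ → Bool) (k : ℕ) :
    ∃ n, k ≤ n ∧ M.rank (stt M bl a0 steps0 x M.init n) = M.maxRankOn q (bl (x k)) := by
  rcases max_attained M bl a0 q hbl hloopf x k with ⟨j, hj, hje⟩
  refine ⟨steps0.length + (Ofs bl x k + j), ?_, ?_⟩
  · have := Ofs_ge bl hbl x k
    omega
  · rw [rho_sgm M bl a0 q steps0 hs0 hs0f x _]
    exact hje

include hbl hloopf hs0 hs0f in
lemma main_reject (hab : M.maxRankOn q (bl false) < M.maxRankOn q (bl true))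
    (hpar1 : M.maxRankOn q (bl true) % 2 = 1)
    (x : ℕ → Bool) (hinf : ∀ K, ∃ k, K ≤ k ∧ x k = true) :
    ¬ ParityAccept (fun n => M.rank (stt M bl a0 steps0 x M.init n)) := by
  set b := M.maxRankOn q (bl true) with hbdef
  have hsup : sSup {r : ℕ | ∃ᶠ n in Filter.atTop,
      M.rank (stt M bl a0 steps0 x M.init n) = r} = b := by
    apply sSup_eq_of_mem_of_ub
    · apply Filter.frequently_atTop.2
      intro N
      rcases hinf N with ⟨k, hk1, hk2⟩
      rcases rank_freq M bl a0 q steps0 hbl hloopf hs0 hs0f x k with ⟨n, hn1, hn2⟩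
      exact ⟨n, by omega, by rw [hn2, hk2]⟩
    · intro r hr
      rcases rank_bound M bl a0 q steps0 hbl hloopf hs0 hs0f x 0 r hr with ⟨k, _, hk⟩
      cases hxk : x k
      · rw [hxk] at hk; omega
      · rw [hxk] at hk; exact hk
  intro hacc
  unfold ParityAccept at hacc
  rw [hsup] at hacc
  rw [Nat.even_iff] at hacc
  omega

include hbl hloopf hs0 hs0f in
lemma main_accept (hab : M.maxRankOn q (bl false) < M.maxRankOn q (bl true))
    (hpar0 : M.maxRankOn q (bl false) % 2 = 0)
    (x : ℕ → Bool) (K : ℕ) (hfin : ∀ k, K ≤ k → x k = false) :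
    ParityAccept (fun n => M.rank (stt M bl a0 steps0 x M.init n)) := by
  set a := M.maxRankOn q (bl false) with hadef
  have hsup : sSup {r : ℕ | ∃ᶠ n in Filter.atTop,
      M.rank (stt M bl a0 steps0 x M.init n) = r} = a := by
    apply sSup_eq_of_mem_of_ub
    · apply Filter.frequently_atTop.2
      intro N
      rcases rank_freq M bl a0 q steps0 hbl hloopf hs0 hs0f x (max K N) with ⟨n, hn1, hn2⟩
      refine ⟨n, by omega, ?_⟩
      rw [hn2, hfin (max K N) (le_max_left _ _)]
    · intro r hr
      rcases rank_bound M bl a0 q steps0 hbl hloopf hs0 hs0f x K r hr with ⟨k, hk1, hk⟩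
      rw [hfin k hk1] at hk
      exact hk
  unfold ParityAccept
  rw [hsup, Nat.even_iff]
  exact hpar0

end MainAccept

/-! ### the choice of accepting subtrees -/

open Classical in
/-- a choice of accepting tree from each state that has one -/
noncomputable def accCh (M : DPTA Alpha Q) (a0 : Alpha) (p : Q) : List Bool → Alpha :=
  if h : ∃ tt, M.AcceptsFrom p tt then h.choose else fun _ => a0

lemma accCh_spec (M : DPTA Alpha Q) (a0 : Alpha) (p : Q) (h : ∃ tt, M.AcceptsFrom p tt) :
    M.AcceptsFrom p (accCh M a0 p) := by
  unfold accCh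
  split
  · next h' => exact h'.choose_spec
  · next h' => exact absurd h h'

section GadgetLang

variable (M : DPTA Alpha Q) (bl : Bool → List (Alpha × Bool)) (a0 : Alpha) (q : Q)
  (steps0 : List (Alpha × Bool))
  (hbl : ∀ c, bl c ≠ []) (hloopf : ∀ c, M.follow q (bl c) = q)
  (hs0 : steps0 ≠ []) (hs0f : M.follow M.init steps0 = q)
  (hab : M.maxRankOn q (bl false) < M.maxRankOn q (bl true))
  (hpar0 : M.maxRankOn q (bl false) % 2 = 0)
  (hpar1 : M.maxRankOn q (bl true) % 2 = 1)

include hbl hloopf hs0 hs0f hab hpar0 hpar1 in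
lemma gadget_lang_iff (x : ℕ → Bool)
    (hoff : ∀ n d, ∃ tt, M.AcceptsFrom
      (M.next (stt M bl a0 steps0 x M.init n) (ltr bl a0 steps0 x n).1 d) tt) :
    mk2 M (accCh M a0) bl a0 steps0 x M.init ∈ M.Lang
      ↔ ∃ K, ∀ k, K ≤ k → x k = false := by
  set acc := accCh M a0 with hacc
  set tx := mk2 M acc bl a0 steps0 x M.init with htx
  constructor
  · -- if x has infinitely many `true`s, the main path rejects
    intro hL
    by_contra hc
    push_neg at hc
    have hinf : ∀ K, ∃ k, K ≤ k ∧ x k = true := by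
      intro K
      rcases hc K with ⟨k, hk1, hk2⟩
      refine ⟨k, hk1, ?_⟩
      revert hk2
      cases x k <;> simp
    have hmain := hL (fun i => (ltr bl a0 steps0 x i).2)
    have heq : (fun n => M.rank (M.runFrom M.init tx
        (DPTA.pref (fun i => (ltr bl a0 steps0 x i).2) n)))
        = fun n => M.rank (stt M bl a0 steps0 x M.init n) := by
      funext n
      rw [show DPTA.pref (fun i => (ltr bl a0 steps0 x i).2) n = ndl bl a0 steps0 x n from rfl,
        runFrom_mk2 M acc bl a0 n steps0 x M.init]
    rw [heq] at hmain
    exact main_reject M bl a0 q steps0 hbl hloopf hs0 hs0f hab hpar1 x hinf hmain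
  · rintro ⟨K, hK⟩
    intro π
    by_cases hmain : ∀ i, π i = (ltr bl a0 steps0 x i).2
    · have heq : (fun n => M.rank (M.runFrom M.init tx (DPTA.pref π n)))
          = fun n => M.rank (stt M bl a0 steps0 x M.init n) := by
        funext n
        rw [pref_congr n (fun i _ => hmain i)]
        rw [show DPTA.pref (fun i => (ltr bl a0 steps0 x i).2) n = ndl bl a0 steps0 x n from rfl,
          runFrom_mk2 M acc bl a0 n steps0 x M.init]
      rw [heq]
      exact main_accept M bl a0 q steps0 hbl hloopf hs0 hs0f hab hpar0 x K hK
    · push_neg at hmain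
      have hex : ∃ i, π i ≠ (ltr bl a0 steps0 x i).2 := hmain
      classical
      set k := Nat.find hex with hkdef
      have hk : π k ≠ (ltr bl a0 steps0 x k).2 := Nat.find_spec hex
      have hlt : ∀ i < k, π i = (ltr bl a0 steps0 x i).2 := by
        intro i hi
        by_contra hne
        have h2 : Nat.find hex ≤ i := Nat.find_le hne
        rw [← hkdef] at h2
        omega
      set p' := M.next (stt M bl a0 steps0 x M.init k) (ltr bl a0 steps0 x k).1 (π k) with hp'
      have hprefk : DPTA.pref π k = ndl bl a0 steps0 x k := pref_congr k fun i hi => hlt i hi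
      have h1 : DPTA.pref π (k + 1) = ndl bl a0 steps0 x k ++ [π k] := by
        rw [pref_snoc, hprefk]
      have hsub : subAt tx (DPTA.pref π (k + 1)) = acc p' := by
        rw [h1]
        funext u
        show tx ((ndl bl a0 steps0 x k ++ [π k]) ++ u) = acc p' u
        rw [List.append_assoc, List.singleton_append]
        exact congrFun (mk2_off M acc bl a0 k steps0 x M.init (π k) hk) u
      have hst : M.runFrom M.init tx (DPTA.pref π (k + 1)) = p' := by
        rw [h1, runFrom_snoc]
        rw [show tx (ndl bl a0 steps0 x k) = (ltr bl a0 steps0 x k).1 from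
          mk2_nd M acc bl a0 k steps0 x M.init]
        rw [show M.runFrom M.init tx (ndl bl a0 steps0 x k) = stt M bl a0 steps0 x M.init k from
          runFrom_mk2 M acc bl a0 k steps0 x M.init]
      have haccp : M.AcceptsFrom p' (acc p') := accCh_spec M a0 p' (hoff k (π k))
      have hpar := haccp (shk (k + 1) π)
      refine (parityAccept_shift (k + 1) ?_).1 hpar
      intro m
      rw [show k + 1 + m = (k + 1) + m from rfl, pref_add, runFrom_append, hst, hsub]
      rfl

include hloopf hpar0 hpar1 in
lemma off_accepts (hM : M.Normalized) (x : ℕ → Bool) (n : ℕ) (d : Bool)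
    (hbl : ∀ c, bl c ≠ []) (hs0 : steps0 ≠ []) (hs0f : M.follow M.init steps0 = q) :
    ∃ tt, M.AcceptsFrom
      (M.next (stt M bl a0 steps0 x M.init n) (ltr bl a0 steps0 x n).1 d) tt := by
  obtain ⟨h1, bot, h2, h3, h4⟩ := hM
  set pn := stt M bl a0 steps0 x M.init n with hpn
  set sn := (ltr bl a0 steps0 x n).1 with hsn
  rcases h4 pn sn with hprod | ⟨hb1, hb2⟩
  · rcases hprod with ⟨tw, htw, v, hrun, hlet⟩
    refine ⟨subAt tw (v ++ [d]), ?_⟩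
    have hsubacc := acceptsFrom_subAt M htw (v ++ [d])
    have : M.runFrom M.init tw (v ++ [d]) = M.next pn sn d := by
      rw [runFrom_snoc]
      rw [show M.runFrom M.init tw v = pn from hrun, show tw v = sn from hlet]
    rwa [this] at hsubacc
  · -- sink case: contradiction with the flower at q
    exfalso
    set qb := (M.delta pn sn).1 with hqb
    obtain ⟨hrej, hself⟩ := h3 qb hb1
    have hqb2 : (M.delta pn sn).2 = qb := by
      have : (some (M.delta pn sn).2 : Option Q) = some qb := by rw [hb2, ← hb1]
      exact Option.some.inj this
    have hnext : ∀ d', M.next pn sn d' = qb := by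
      intro d'
      cases d' <;> simp [DPTA.next, hqb2] <;> try rfl
    have hstep : stt M bl a0 steps0 x M.init (n + 1) = qb := by
      rw [stt_succ]
      exact hnext _
    -- from position n+1 the path reaches q
    have hreach : ∀ dd, ∃ steps, M.follow (stt M bl a0 steps0 x M.init (n + 1)) steps
        = stt M bl a0 steps0 x M.init (n + 1 + dd) := by
      intro dd
      induction dd with
      | zero => exact ⟨[], rfl⟩
      | succ dd ih =>
        rcases ih with ⟨steps, hsteps⟩
        refine ⟨steps ++ [ltr bl a0 steps0 x (n + 1 + dd)], ?_⟩
        rw [follow_snoc, hsteps, ← stt_succ]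
        rfl
    have hOge := Ofs_ge bl hbl x (n + 1)
    have hqhit : stt M bl a0 steps0 x M.init (steps0.length + Ofs bl x (n + 1)) = q := by
      rw [rho_sgm M bl a0 q steps0 hs0 hs0f x _]
      rw [show Ofs bl x (n + 1) = Ofs bl x (n + 1) + 0 by omega]
      rw [sgm_block M bl a0 q hbl hloopf x (n + 1) 0]
      rfl
    rcases hreach ((steps0.length + Ofs bl x (n + 1)) - (n + 1)) with ⟨steps, hsteps⟩
    rw [show n + 1 + ((steps0.length + Ofs bl x (n + 1)) - (n + 1))
        = steps0.length + Ofs bl x (n + 1) by omega, hqhit, hstep] at hsteps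
    rw [follow_of_self_loop M hself] at hsteps
    -- q = qb, flower parities clash
    apply flower_ne_sink M hpar0 hpar1
    rw [hsteps] at hself
    exact hself

end GadgetLang

/-! ### the hardness direction -/

section Hardness

variable [TopologicalSpace Alpha] [DiscreteTopology Alpha] [Nonempty Alpha]

/-- the set of eventually-false sequences -/
def Fin1 : Set (ℕ → Bool) := {x | ∃ K, ∀ k, K ≤ k → x k = false}

lemma dense_seq (c : Bool) (s : Set (ℕ → Bool))
    (hmem : ∀ (y : ℕ → Bool) (N : ℕ), (fun i => if i < N then y i else c) ∈ s) :
    Dense s := by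
  intro y
  apply mem_closure_of_tendsto (f := fun N : ℕ => fun i => if i < N then y i else c)
    (b := Filter.atTop)
  · rw [tendsto_pi_nhds]
    intro i
    have hev : (fun _ : ℕ => y i) =ᶠ[Filter.atTop] (fun N => if i < N then y i else c) := by
      filter_upwards [Filter.eventually_ge_atTop (i + 1)] with N hN
      rw [if_pos (by omega)]
    exact Filter.Tendsto.congr' hev tendsto_const_nhds
  · exact Filter.Eventually.of_forall fun N => hmem y N

lemma fin1_dense : Dense Fin1 := by
  apply dense_seq false
  intro y N
  exact ⟨N, fun k hk => by simp only [if_neg (by omega : ¬ k < N)]⟩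

/-- the tails-hit-true sets are dense open -/
def Etail (N : ℕ) : Set (ℕ → Bool) := ⋃ i, {x : ℕ → Bool | N ≤ i ∧ x i = true}

lemma Etail_isOpen (N : ℕ) : IsOpen (Etail N) := by
  apply isOpen_iUnion
  intro i
  by_cases hNi : N ≤ i
  · have : {x : ℕ → Bool | N ≤ i ∧ x i = true} = (fun x : ℕ → Bool => x i) ⁻¹' {true} := by
      ext x; simp [hNi]
    rw [this]
    exact IsOpen.preimage (continuous_apply i) (isOpen_discrete _)
  · have : {x : ℕ → Bool | N ≤ i ∧ x i = true} = ∅ := by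
      ext x; simp [hNi]
    rw [this]
    exact isOpen_empty
lemma Etail_dense (N : ℕ) : Dense (Etail N) := by
  apply dense_seq true
  intro y K
  refine Set.mem_iUnion.2 ⟨max N K, le_max_left _ _, ?_⟩
  simp only [if_neg (by omega : ¬ max N K < K)]

lemma not_pi02_of_flower (M : DPTA Alpha Q) [Finite Q] (hM : M.Normalized)
    (hfl : M.HasFlower 0 1) :
    ¬ ∃ f : ℕ → Set (List Bool → Alpha), (∀ n, IsOpen (f n)) ∧ M.Lang = ⋂ n, f n := by
  classical
  obtain ⟨qf, lam, hcond, hgrow⟩ := hfl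
  obtain ⟨hl0, hp0⟩ := hcond 0 (le_refl 0) (by omega)
  obtain ⟨hl1, hp1⟩ := hcond 1 (by omega) (le_refl 1)
  have hab := hgrow 0 (le_refl 0) (by omega)
  set bl : Bool → List (Alpha × Bool) := fun c => if c then lam 1 else lam 0 with hbldef
  have hblf : bl false = lam 0 := rfl
  have hblt : bl true = lam 1 := rfl
  have a0 : Alpha := Classical.arbitrary Alpha
  have hbl : ∀ c, bl c ≠ [] := by
    intro c
    cases c
    · rw [hblf]; exact hl0.1
    · rw [hblt]; exact hl1.1
  have hloopf : ∀ c, M.follow qf (bl c) = qf := by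
    intro c
    cases c
    · rw [hblf]; exact hl0.2
    · rw [hblt]; exact hl1.2
  have hpar0 : M.maxRankOn qf (bl false) % 2 = 0 := by rw [hblf]; simpa using hp0
  have hpar1 : M.maxRankOn qf (bl true) % 2 = 1 := by rw [hblt]; simpa using hp1
  have hab' : M.maxRankOn qf (bl false) < M.maxRankOn qf (bl true) := by
    rw [hblf, hblt]; simpa using hab
  -- a nonempty list of steps from the initial state to qf
  obtain ⟨st0, hst0⟩ := hM.1 qf
  obtain ⟨steps0, hs0, hs0f⟩ : ∃ steps0, steps0 ≠ [] ∧ M.follow M.init steps0 = qf := by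
    cases st0 with
    | nil =>
      refine ⟨bl false, hbl false, ?_⟩
      have : M.init = qf := hst0
      rw [this]
      exact hloopf false
    | cons s l => exact ⟨s :: l, by simp, hst0⟩
  -- the gadget map
  set G : (ℕ → Bool) → (List Bool → Alpha) :=
    fun x => mk2 M (accCh M a0) bl a0 steps0 x M.init with hGdef
  have hGmem : ∀ x, G x ∈ M.Lang ↔ x ∈ Fin1 := by
    intro x
    exact gadget_lang_iff M bl a0 qf steps0 hbl hloopf hs0 hs0f hab' hpar0 hpar1 x
      (fun n d => off_accepts M bl a0 qf steps0 hloopf hpar0 hpar1 hM x n d hbl hs0 hs0f)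
  have hGcont : Continuous G := by
    apply continuous_pi
    intro v
    have hfac : (fun x => G x v) = (fun y : Fin (v.length + 1) → Bool =>
        mk2 M (accCh M a0) bl a0 steps0
          (fun i => if h : i < v.length + 1 then y ⟨i, h⟩ else false) M.init v)
        ∘ (fun x (i : Fin (v.length + 1)) => x i) := by
      funext x
      show mk2 M (accCh M a0) bl a0 steps0 x M.init v
        = mk2 M (accCh M a0) bl a0 steps0
            (fun i => if h : i < v.length + 1 then x i else false) M.init v
      apply mk2_congr
      intro i hi
      rw [dif_pos (by omega : i < v.length + 1)]
    rw [hfac]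
    exact Continuous.comp continuous_of_discreteTopology
      (continuous_pi fun i => continuous_apply (i : ℕ))
  rintro ⟨f, hfo, hfeq⟩
  set D : ℕ → Set (ℕ → Bool) := fun n => G ⁻¹' f n with hDdef
  have hDopen : ∀ n, IsOpen (D n) := fun n => (hfo n).preimage hGcont
  have hDcap : (⋂ n, D n) = Fin1 := by
    ext x
    rw [Set.mem_iInter]
    have : (∀ n, x ∈ D n) ↔ G x ∈ ⋂ n, f n := by
      simp [hDdef, Set.mem_iInter]
    rw [this, ← hfeq]
    exact hGmem x
  have hDdense : ∀ n, Dense (D n) := by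
    intro n
    apply Dense.mono _ fin1_dense
    rw [← hDcap]
    exact Set.iInter_subset D n
  have hB : Dense (⋂ n, D n ∩ Etail n) := by
    apply dense_iInter_of_isOpen
    · exact fun n => (hDopen n).inter (Etail_isOpen n)
    · exact fun n => (hDdense n).inter_of_isOpen_left (Etail_dense n) (hDopen n)
  obtain ⟨x, hx⟩ := hB.nonempty
  rw [Set.mem_iInter] at hx
  have hxF : x ∈ Fin1 := by
    rw [← hDcap, Set.mem_iInter]
    exact fun n => (hx n).1
  obtain ⟨K, hK⟩ := hxF
  obtain ⟨i, hNi, htrue⟩ := Set.mem_iUnion.1 (hx K).2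
  have := hK i hNi
  rw [htrue] at this
  exact Bool.noConfusion this

end Hardness
end PfAux

/-- the language of a normalized deterministic tree automaton is `Π⁰₂`
iff the automaton contains no `(0,1)`-flower. -/
theorem pi02_characterisation {Alpha Q : Type} [Fintype Alpha] [Nonempty Alpha] [Fintype Q]
    [TopologicalSpace Alpha] [DiscreteTopology Alpha]
    (M : DPTA Alpha Q) (hM : M.Normalized) :
    IsPi02 M.Lang ↔ ¬ M.HasFlower 0 1 := by
  constructor
  · intro hpi hfl
    exact PfAux.not_pi02_of_flower M hM hfl hpi
  · intro hnf
    exact PfAux.isPi02_of_noflower M hnf
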